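/- arXiv:2310.18919 — 4 statements merged into one kernel-verified Lean document; each statement's English description precedes it below -/
import Mathlib

section
/- Let d and K be positive integers, let λ ≥ 1 be a real number, let φ₁, …, φ_K ∈ ℝ^d with ‖φ_t‖ ≤ 1 for all t, and let τ₁, …, τ_K be nonnegative integers (the delays). For each k ∈ {1,…,K} define the d×d matrices Σ^k = λI + Σ_{t=1}^{k−1} φ_t φ_tᵀ, Ω^k = λI + Σ_{t=1}^{k−1} 𝟙[t + τ_t ≤ k−1] φ_t φ_tᵀ, Λ^k = Σ_{t=1}^{k−1} 𝟙[t + τ_t > k−1] φ_t φ_tᵀ, and the count U_k = Σ_{s=1}^{k} 𝟙[s + τ_s > k]. Then Σ_{k=1}^{K} √(φ_kᵀ (Σ^k)⁻¹ Λ^k (Ω^k)⁻¹ φ_k) ≤ ((1 + max_{k∈[K]} U_k)/2) · Σ_{k=1}^{K} φ_kᵀ (Σ^k)⁻¹ φ_k + Σ_{t=1}^{K−1} τ_t · φ_tᵀ (Σ^t)⁻¹ φ_t. -/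
open Matrix Finset

section Helpers

variable {n : Type*} [Fintype n] [DecidableEq n]

private lemma dot_self_nonneg' (x : n → ℝ) : 0 ≤ x ⬝ᵥ x :=
  Finset.sum_nonneg fun i _ => mul_self_nonneg (x i)

private lemma quad_nonneg' {M : Matrix n n ℝ} (hM : M.PosSemidef) (x : n → ℝ) :
    0 ≤ x ⬝ᵥ M *ᵥ x := by simpa using hM.dotProduct_mulVec_nonneg x

private lemma dot_sq_le' (u x : n → ℝ) : (u ⬝ᵥ x) ^ 2 ≤ (u ⬝ᵥ u) * (x ⬝ᵥ x) := by
  simpa [dotProduct, sq] using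
    Finset.sum_mul_sq_le_sq_mul_sq Finset.univ u x

private lemma cs_psd' {M : Matrix n n ℝ} (hM : M.PosSemidef) (x y : n → ℝ) :
    (x ⬝ᵥ M *ᵥ y) ^ 2 ≤ (x ⬝ᵥ M *ᵥ x) * (y ⬝ᵥ M *ᵥ y) := by
  obtain ⟨B, rfl⟩ : ∃ B : Matrix n n ℝ, M = Bᴴ * B := by
    open MatrixOrder in exact CStarAlgebra.nonneg_iff_eq_star_mul_self.mp hM.nonneg
  have hBH : (Bᴴ : Matrix n n ℝ) = Bᵀ := by
    ext i j; simp [Matrix.conjTranspose_apply]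
  have key : ∀ u v : n → ℝ, u ⬝ᵥ (Bᴴ * B) *ᵥ v = (B *ᵥ u) ⬝ᵥ (B *ᵥ v) := by
    intro u v
    rw [hBH, ← Matrix.mulVec_mulVec, Matrix.dotProduct_mulVec, Matrix.vecMul_transpose]
  rw [key, key, key]
  exact dot_sq_le' _ _

private lemma hermitian_transpose_eq' {M : Matrix n n ℝ} (hM : M.IsHermitian) : Mᵀ = M := by
  ext i j
  simpa [Matrix.conjTranspose_apply] using congrFun (congrFun hM i) j

private lemma mul_inv_cancel'' {A : Matrix n n ℝ} (hA : A.PosDef) : A * A⁻¹ = 1 :=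
  Matrix.mul_nonsing_inv _ ((Matrix.isUnit_iff_isUnit_det _).mp hA.isUnit)

private lemma inv_mul_cancel'' {A : Matrix n n ℝ} (hA : A.PosDef) : A⁻¹ * A = 1 :=
  Matrix.nonsing_inv_mul _ ((Matrix.isUnit_iff_isUnit_det _).mp hA.isUnit)

/-- Loewner anti-monotonicity of the inverse, in quadratic-form language,
with a scale factor. -/
private lemma inv_quad_le' {A B : Matrix n n ℝ} (hA : A.PosDef) (hB : B.PosDef)
    {c : ℝ} (hc : 0 ≤ c) (h : ∀ x : n → ℝ, x ⬝ᵥ A *ᵥ x ≤ c * (x ⬝ᵥ B *ᵥ x)) (x : n → ℝ) :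
    x ⬝ᵥ B⁻¹ *ᵥ x ≤ c * (x ⬝ᵥ A⁻¹ *ᵥ x) := by
  have hAT : Aᵀ = A := hermitian_transpose_eq' hA.1
  obtain ⟨y, hx⟩ : ∃ y : n → ℝ, B *ᵥ y = x :=
    ⟨B⁻¹ *ᵥ x, by rw [Matrix.mulVec_mulVec, mul_inv_cancel'' hB, Matrix.one_mulVec]⟩
  have hInvA : (A⁻¹).PosSemidef := hA.inv.posSemidef
  have e0 : A *ᵥ y = y ᵥ* A := by
    calc A *ᵥ y = Aᵀ *ᵥ y := by rw [hAT]
      _ = y ᵥ* A := Matrix.mulVec_transpose A y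
  have e1 : (A *ᵥ y) ⬝ᵥ (A⁻¹ *ᵥ x) = y ⬝ᵥ x := by
    rw [Matrix.dotProduct_mulVec, e0, Matrix.vecMul_vecMul, mul_inv_cancel'' hA,
      Matrix.vecMul_one]
  have e2 : (A *ᵥ y) ⬝ᵥ (A⁻¹ *ᵥ (A *ᵥ y)) = y ⬝ᵥ A *ᵥ y := by
    rw [Matrix.mulVec_mulVec, inv_mul_cancel'' hA, Matrix.one_mulVec]
    exact dotProduct_comm _ _
  have cs := cs_psd' hInvA (A *ᵥ y) x
  rw [e1, e2] at cs
  have ht : x ⬝ᵥ B⁻¹ *ᵥ x = y ⬝ᵥ x := by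
    rw [← hx, Matrix.mulVec_mulVec, inv_mul_cancel'' hB, Matrix.one_mulVec]
    exact dotProduct_comm _ _
  have hq : y ⬝ᵥ B *ᵥ y = y ⬝ᵥ x := by rw [hx]
  have h1 := h y
  rw [hq] at h1
  have h2 : 0 ≤ y ⬝ᵥ x := by rw [← hq]; exact quad_nonneg' hB.posSemidef y
  have h3 : 0 ≤ x ⬝ᵥ A⁻¹ *ᵥ x := quad_nonneg' hInvA x
  have h4 : 0 ≤ y ⬝ᵥ A *ᵥ y := quad_nonneg' hA.posSemidef y
  rw [ht]
  rcases h2.eq_or_lt with h0 | h0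
  · rw [← h0]; exact mul_nonneg hc h3
  · have hmul : (y ⬝ᵥ x) * (y ⬝ᵥ x) ≤ (y ⬝ᵥ x) * (c * (x ⬝ᵥ A⁻¹ *ᵥ x)) := by
      nlinarith [mul_le_mul_of_nonneg_right h1 h3]
    exact le_of_mul_le_mul_left hmul h0

private lemma vecMulVec_mulVec' (u v w : n → ℝ) : vecMulVec u v *ᵥ w = (v ⬝ᵥ w) • u := by
  ext i
  simp [Matrix.mulVec, Matrix.vecMulVec_apply, dotProduct, Finset.mul_sum,
    Finset.sum_mul, mul_assoc, mul_comm, mul_left_comm]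

private lemma quad_vecMulVec' (v x : n → ℝ) : x ⬝ᵥ vecMulVec v v *ᵥ x = (v ⬝ᵥ x) ^ 2 := by
  rw [vecMulVec_mulVec', dotProduct_smul, smul_eq_mul, dotProduct_comm x v, sq]

private lemma psd_vecMulVec' (v : n → ℝ) : (vecMulVec v v).PosSemidef := by
  refine .of_dotProduct_mulVec_nonneg ?_ fun x => ?_
  · ext i j; simp [Matrix.conjTranspose_apply, Matrix.vecMulVec_apply, mul_comm]
  · simp only [star_trivial]
    rw [quad_vecMulVec']
    exact sq_nonneg _

private lemma psd_sum' {ι : Type*} {s : Finset ι} {f : ι → Matrix n n ℝ}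
    (h : ∀ i ∈ s, (f i).PosSemidef) : (∑ i ∈ s, f i).PosSemidef :=
  Finset.sum_induction f _ (fun _ _ ha hb => ha.add hb) Matrix.PosSemidef.zero h

private lemma psd_ite_smul' (c : Prop) [Decidable c] {M : Matrix n n ℝ} (hM : M.PosSemidef) :
    ((if c then (1 : ℝ) else 0) • M).PosSemidef := by
  split_ifs
  · simpa using hM
  · simpa using Matrix.PosSemidef.zero

private lemma pd_smul_one' {lam : ℝ} (hl : 0 < lam) : (lam • (1 : Matrix n n ℝ)).PosDef := by
  refine .of_dotProduct_mulVec_pos ?_ fun x hx => ?_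
  · ext i j
    simp [Matrix.conjTranspose_apply, Matrix.one_apply, eq_comm]
  · simp only [star_trivial]
    rw [Matrix.smul_mulVec, Matrix.one_mulVec, dotProduct_smul, smul_eq_mul]
    have hnn := dot_self_nonneg' x
    have hne : x ⬝ᵥ x ≠ 0 := fun hzero => hx (dotProduct_self_eq_zero.mp hzero)
    exact mul_pos hl (lt_of_le_of_ne hnn (Ne.symm hne))

private lemma dot_sum_mulVec' {ι : Type*} (s : Finset ι) (N : ι → Matrix n n ℝ) (x y : n → ℝ) :
    x ⬝ᵥ (∑ i ∈ s, N i) *ᵥ y = ∑ i ∈ s, x ⬝ᵥ N i *ᵥ y := by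
  classical
  induction s using Finset.induction_on with
  | empty => simp
  | insert a s ha ih =>
      rw [Finset.sum_insert ha, Finset.sum_insert ha, Matrix.add_mulVec,
        dotProduct_add, ih]

private lemma quad_smul_one_add' (lam : ℝ) (M : Matrix n n ℝ) (x : n → ℝ) :
    x ⬝ᵥ (lam • (1 : Matrix n n ℝ) + M) *ᵥ x = lam * (x ⬝ᵥ x) + x ⬝ᵥ M *ᵥ x := by
  rw [Matrix.add_mulVec, dotProduct_add, Matrix.smul_mulVec,
    Matrix.one_mulVec, dotProduct_smul, smul_eq_mul]

private lemma sqrt_mul_le_add_div_two' {u v : ℝ} (hu : 0 ≤ u) (hv : 0 ≤ v) :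
    Real.sqrt (u * v) ≤ (u + v) / 2 := by
  rw [show (u + v) / 2 = Real.sqrt (((u + v) / 2) ^ 2) by rw [Real.sqrt_sq (by positivity)]]
  exact Real.sqrt_le_sqrt (by nlinarith [sq_nonneg (u - v)])

end Helpers

/-- Lemma B.3 of the paper: bounding the cross term involving the delayed design
matrix `Ω^k`, the full design matrix `Σ^k`, and the complement matrix `Λ^k`. -/
theorem delayed_cross_term_bound
    (d K : ℕ) (hd : 0 < d) (hK : 0 < K) (lam : ℝ) (hlam : 1 ≤ lam)
    (φ : ℕ → EuclideanSpace ℝ (Fin d)) (hφ : ∀ t ∈ Finset.Icc 1 K, ‖φ t‖ ≤ 1)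
    (τ : ℕ → ℕ) :
    let Sig : ℕ → Matrix (Fin d) (Fin d) ℝ := fun k =>
      lam • (1 : Matrix (Fin d) (Fin d) ℝ) +
        ∑ t ∈ Finset.Icc 1 (k - 1), vecMulVec (φ t) (φ t)
    let Om : ℕ → Matrix (Fin d) (Fin d) ℝ := fun k =>
      lam • (1 : Matrix (Fin d) (Fin d) ℝ) +
        ∑ t ∈ Finset.Icc 1 (k - 1),
          (if t + τ t ≤ k - 1 then (1 : ℝ) else 0) • vecMulVec (φ t) (φ t)
    let Lam : ℕ → Matrix (Fin d) (Fin d) ℝ := fun k =>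
      ∑ t ∈ Finset.Icc 1 (k - 1),
        (if k - 1 < t + τ t then (1 : ℝ) else 0) • vecMulVec (φ t) (φ t)
    let U : ℕ → ℕ := fun k => ((Finset.Icc 1 k).filter (fun s => k < s + τ s)).card
    ∑ k ∈ Finset.Icc 1 K,
        Real.sqrt (φ k ⬝ᵥ ((Sig k)⁻¹ * Lam k * (Om k)⁻¹).mulVec (φ k))
      ≤ (1 + (((Finset.Icc 1 K).sup U : ℕ) : ℝ)) / 2 *
          ∑ k ∈ Finset.Icc 1 K, φ k ⬝ᵥ (Sig k)⁻¹.mulVec (φ k)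
        + ∑ t ∈ Finset.Icc 1 (K - 1), (τ t : ℝ) * (φ t ⬝ᵥ (Sig t)⁻¹.mulVec (φ t)) := by
  intro Sig Om Lam U
  obtain ⟨K', rfl⟩ : ∃ K', K = K' + 1 := ⟨K - 1, by omega⟩
  simp only [Nat.add_sub_cancel]
  have hlam0 : (0 : ℝ) < lam := by linarith
  -- rfl-definitions for the let-bound functions
  have hSigdef : ∀ k, Sig k = lam • (1 : Matrix (Fin d) (Fin d) ℝ) +
      ∑ t ∈ Finset.Icc 1 (k - 1), vecMulVec (φ t) (φ t) := fun _ => rfl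
  have hOmdef : ∀ k, Om k = lam • (1 : Matrix (Fin d) (Fin d) ℝ) +
      ∑ t ∈ Finset.Icc 1 (k - 1),
        (if t + τ t ≤ k - 1 then (1 : ℝ) else 0) • vecMulVec (φ t) (φ t) := fun _ => rfl
  have hLamdef : ∀ k, Lam k = ∑ t ∈ Finset.Icc 1 (k - 1),
      (if k - 1 < t + τ t then (1 : ℝ) else 0) • vecMulVec (φ t) (φ t) := fun _ => rfl
  have hSigPD : ∀ k, (Sig k).PosDef := fun k =>
    (pd_smul_one' hlam0).add_posSemidef (psd_sum' fun t _ => psd_vecMulVec' (φ t))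
  have hOmPD : ∀ k, (Om k).PosDef := fun k =>
    (pd_smul_one' hlam0).add_posSemidef
      (psd_sum' fun t _ => psd_ite_smul' _ (psd_vecMulVec' (φ t)))
  have haK : ∀ k, 0 ≤ φ k ⬝ᵥ (Sig k)⁻¹ *ᵥ φ k := fun k =>
    quad_nonneg' (hSigPD k).inv.posSemidef _
  have habar0 : ∀ t, (0:ℝ) ≤ φ t ⬝ᵥ (Sig t)⁻¹ *ᵥ φ t := haK
  have hdotφ : ∀ t ∈ Finset.Icc 1 (K' + 1), φ t ⬝ᵥ φ t ≤ 1 := by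
    intro t ht
    have h1 := hφ t ht
    have h2 : φ t ⬝ᵥ φ t = ‖φ t‖ ^ 2 := by
      rw [← real_inner_self_eq_norm_sq]
      simp only [PiLp.inner_apply, dotProduct, RCLike.inner_apply, conj_trivial, mul_comm]
    rw [h2]
    nlinarith [norm_nonneg (φ t)]
  have hOm_ge : ∀ k (x : Fin d → ℝ), x ⬝ᵥ x ≤ x ⬝ᵥ Om k *ᵥ x := by
    intro k x
    rw [hOmdef, quad_smul_one_add']
    have hq : 0 ≤ x ⬝ᵥ (∑ t ∈ Finset.Icc 1 (k - 1),
        (if t + τ t ≤ k - 1 then (1 : ℝ) else 0) • vecMulVec (φ t) (φ t)) *ᵥ x :=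
      quad_nonneg' (psd_sum' fun t _ => psd_ite_smul' _ (psd_vecMulVec' (φ t))) x
    nlinarith [dot_self_nonneg' x]
  have hSig_mono : ∀ t k, t ≤ k → ∀ x : Fin d → ℝ,
      x ⬝ᵥ Sig t *ᵥ x ≤ x ⬝ᵥ Sig k *ᵥ x := by
    intro t k htk x
    rw [hSigdef, hSigdef, quad_smul_one_add', quad_smul_one_add']
    apply add_le_add_right
    rw [dot_sum_mulVec', dot_sum_mulVec']
    exact Finset.sum_le_sum_of_subset_of_nonneg
      (Finset.Icc_subset_Icc_right (by omega))
      (fun i _ _ => quad_nonneg' (psd_vecMulVec' (φ i)) x)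
  set Mset : ℕ → Finset ℕ :=
    fun k => (Finset.Icc 1 (k - 1)).filter (fun t => k - 1 < t + τ t) with hMset
  -- the key per-episode bound
  have key : ∀ k ∈ Finset.Icc 1 (K' + 1),
      Real.sqrt (φ k ⬝ᵥ ((Sig k)⁻¹ * Lam k * (Om k)⁻¹) *ᵥ φ k)
        ≤ (1 + ((Mset k).card : ℝ)) / 2 * (φ k ⬝ᵥ (Sig k)⁻¹ *ᵥ φ k)
          + (1 / 2) * ∑ t ∈ Mset k, φ t ⬝ᵥ (Sig t)⁻¹ *ᵥ φ t := by
    intro k hk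
    obtain ⟨hk1, hk2⟩ := Finset.mem_Icc.mp hk
    have hS := hSigPD k
    have hO := hOmPD k
    have hSi : ((Sig k)⁻¹).PosSemidef := hS.inv.posSemidef
    have hOi : ((Om k)⁻¹).PosSemidef := hO.inv.posSemidef
    set a : ℝ := φ k ⬝ᵥ (Sig k)⁻¹ *ᵥ φ k with ha
    have ha0 : 0 ≤ a := haK k
    set m : ℝ := ((Mset k).card : ℝ) with hmdef
    have hm0 : (0 : ℝ) ≤ m := Nat.cast_nonneg _
    have hsub : Mset k ⊆ Finset.Icc 1 (K' + 1) := by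
      intro t ht
      rw [hMset] at ht
      simp only [Finset.mem_filter, Finset.mem_Icc] at ht ⊢
      omega
    -- Λ quadratic form bound
    have hLam_quad : ∀ x : Fin d → ℝ, x ⬝ᵥ Lam k *ᵥ x ≤ m * (x ⬝ᵥ x) := by
      intro x
      rw [hLamdef, dot_sum_mulVec']
      have e : ∀ t ∈ Finset.Icc 1 (k - 1),
          x ⬝ᵥ ((if k - 1 < t + τ t then (1 : ℝ) else 0) • vecMulVec (φ t) (φ t)) *ᵥ x
            = if k - 1 < t + τ t then (φ t ⬝ᵥ x) ^ 2 else 0 := by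
        intro t _
        rw [Matrix.smul_mulVec, dotProduct_smul, smul_eq_mul, quad_vecMulVec']
        split_ifs <;> ring
      rw [Finset.sum_congr rfl e, ← Finset.sum_filter]
      calc ∑ t ∈ Mset k, (φ t ⬝ᵥ x) ^ 2
          ≤ ∑ _t ∈ Mset k, x ⬝ᵥ x := by
            refine Finset.sum_le_sum fun t ht => ?_
            have h1 := dot_sq_le' (φ t) x
            have h2 := hdotφ t (hsub ht)
            nlinarith [dot_self_nonneg' x]
        _ = m * (x ⬝ᵥ x) := by rw [Finset.sum_const, nsmul_eq_mul, hmdef]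
    -- Ω + Λ = Σ
    have hOL : Sig k = Om k + Lam k := by
      rw [hSigdef, hOmdef, hLamdef, add_assoc, ← Finset.sum_add_distrib]
      congr 1
      refine Finset.sum_congr rfl fun t _ => ?_
      by_cases hc : t + τ t ≤ k - 1
      · rw [if_pos hc, if_neg (by omega), one_smul, zero_smul, add_zero]
      · rw [if_neg hc, if_pos (by omega), zero_smul, one_smul, zero_add]
    -- Σ ⪯ (1+m) Ω
    have hSO : ∀ x : Fin d → ℝ, x ⬝ᵥ Sig k *ᵥ x ≤ (1 + m) * (x ⬝ᵥ Om k *ᵥ x) := by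
      intro x
      rw [hOL, Matrix.add_mulVec, dotProduct_add]
      have h1 := hLam_quad x
      have h2 := hOm_ge k x
      have h3 := mul_le_mul_of_nonneg_left h2 hm0
      linarith
    have hb : ∀ x : Fin d → ℝ,
        x ⬝ᵥ (Om k)⁻¹ *ᵥ x ≤ (1 + m) * (x ⬝ᵥ (Sig k)⁻¹ *ᵥ x) :=
      inv_quad_le' hS hO (by linarith) hSO
    -- expansion of the cross term
    have hexp : φ k ⬝ᵥ ((Sig k)⁻¹ * Lam k * (Om k)⁻¹) *ᵥ φ k
        = ∑ t ∈ Mset k,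
            (φ t ⬝ᵥ ((Om k)⁻¹ *ᵥ φ k)) * (φ k ⬝ᵥ (Sig k)⁻¹ *ᵥ φ t) := by
      rw [hMset]
      rw [hLamdef, Finset.mul_sum, Finset.sum_mul, dot_sum_mulVec', Finset.sum_filter]
      refine Finset.sum_congr rfl fun t _ => ?_
      rw [Matrix.mul_smul, Matrix.smul_mul, Matrix.smul_mulVec,
        dotProduct_smul, smul_eq_mul]
      rw [← Matrix.mulVec_mulVec, ← Matrix.mulVec_mulVec, vecMulVec_mulVec',
        Matrix.mulVec_smul, dotProduct_smul, smul_eq_mul]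
      split_ifs <;> ring
    -- termwise bound
    have hterm : ∀ t ∈ Mset k,
        (φ t ⬝ᵥ ((Om k)⁻¹ *ᵥ φ k)) * (φ k ⬝ᵥ (Sig k)⁻¹ *ᵥ φ t)
          ≤ (1 + m) * a * (φ t ⬝ᵥ (Sig k)⁻¹ *ᵥ φ t) := by
      intro t _
      have hat : 0 ≤ φ t ⬝ᵥ (Sig k)⁻¹ *ᵥ φ t := quad_nonneg' hSi _
      have hOu : 0 ≤ φ t ⬝ᵥ (Om k)⁻¹ *ᵥ φ t := quad_nonneg' hOi _
      have hOψ : 0 ≤ φ k ⬝ᵥ (Om k)⁻¹ *ᵥ φ k := quad_nonneg' hOi _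
      have c1 := cs_psd' hOi (φ t) (φ k)
      have c2 := cs_psd' hSi (φ k) (φ t)
      have b1 := hb (φ t)
      have b2 := hb (φ k)
      rw [← ha] at b2 c2
      have hC : 0 ≤ (1 + m) * a * (φ t ⬝ᵥ (Sig k)⁻¹ *ᵥ φ t) := by positivity
      have hfin : ((φ t ⬝ᵥ ((Om k)⁻¹ *ᵥ φ k)) * (φ k ⬝ᵥ (Sig k)⁻¹ *ᵥ φ t)) ^ 2
          ≤ ((1 + m) * a * (φ t ⬝ᵥ (Sig k)⁻¹ *ᵥ φ t)) ^ 2 := by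
        nlinarith [sq_nonneg (φ t ⬝ᵥ ((Om k)⁻¹ *ᵥ φ k)),
          sq_nonneg (φ k ⬝ᵥ (Sig k)⁻¹ *ᵥ φ t),
          mul_le_mul c1 c2 (sq_nonneg _) (mul_nonneg hOu hOψ),
          mul_le_mul b1 b2 hOψ (mul_nonneg (by linarith) hat),
          mul_nonneg ha0 hat, mul_nonneg hOu hOψ]
      calc (φ t ⬝ᵥ ((Om k)⁻¹ *ᵥ φ k)) * (φ k ⬝ᵥ (Sig k)⁻¹ *ᵥ φ t)
          ≤ |(φ t ⬝ᵥ ((Om k)⁻¹ *ᵥ φ k)) * (φ k ⬝ᵥ (Sig k)⁻¹ *ᵥ φ t)| := le_abs_self _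
        _ = Real.sqrt (((φ t ⬝ᵥ ((Om k)⁻¹ *ᵥ φ k)) * (φ k ⬝ᵥ (Sig k)⁻¹ *ᵥ φ t)) ^ 2) :=
            (Real.sqrt_sq_eq_abs _).symm
        _ ≤ Real.sqrt (((1 + m) * a * (φ t ⬝ᵥ (Sig k)⁻¹ *ᵥ φ t)) ^ 2) :=
            Real.sqrt_le_sqrt hfin
        _ = (1 + m) * a * (φ t ⬝ᵥ (Sig k)⁻¹ *ᵥ φ t) := Real.sqrt_sq hC
    have hmono : ∑ t ∈ Mset k, (φ t ⬝ᵥ (Sig k)⁻¹ *ᵥ φ t)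
        ≤ ∑ t ∈ Mset k, φ t ⬝ᵥ (Sig t)⁻¹ *ᵥ φ t := by
      refine Finset.sum_le_sum fun t ht => ?_
      have htk : t ≤ k := by
        rw [hMset] at ht
        simp only [Finset.mem_filter, Finset.mem_Icc] at ht
        omega
      have := inv_quad_le' (hSigPD t) (hSigPD k) (c := 1) zero_le_one
        (fun x => by rw [one_mul]; exact hSig_mono t k htk x) (φ t)
      simpa using this
    set B : ℝ := ∑ t ∈ Mset k, φ t ⬝ᵥ (Sig t)⁻¹ *ᵥ φ t with hB
    have hB0 : 0 ≤ B := Finset.sum_nonneg fun t _ => habar0 t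
    have hfinal : φ k ⬝ᵥ ((Sig k)⁻¹ * Lam k * (Om k)⁻¹) *ᵥ φ k ≤ ((1 + m) * a) * B := by
      calc φ k ⬝ᵥ ((Sig k)⁻¹ * Lam k * (Om k)⁻¹) *ᵥ φ k
          = ∑ t ∈ Mset k, (φ t ⬝ᵥ ((Om k)⁻¹ *ᵥ φ k)) * (φ k ⬝ᵥ (Sig k)⁻¹ *ᵥ φ t) := hexp
        _ ≤ ∑ t ∈ Mset k, (1 + m) * a * (φ t ⬝ᵥ (Sig k)⁻¹ *ᵥ φ t) :=
            Finset.sum_le_sum hterm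
        _ = (1 + m) * a * ∑ t ∈ Mset k, (φ t ⬝ᵥ (Sig k)⁻¹ *ᵥ φ t) := by
            rw [Finset.mul_sum]
        _ ≤ ((1 + m) * a) * B :=
            mul_le_mul_of_nonneg_left hmono (mul_nonneg (by linarith) ha0)
    calc Real.sqrt (φ k ⬝ᵥ ((Sig k)⁻¹ * Lam k * (Om k)⁻¹) *ᵥ φ k)
        ≤ Real.sqrt (((1 + m) * a) * B) := Real.sqrt_le_sqrt hfinal
      _ ≤ ((1 + m) * a + B) / 2 :=
          sqrt_mul_le_add_div_two' (mul_nonneg (by linarith) ha0) hB0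
      _ = (1 + m) / 2 * a + (1 / 2) * B := by ring
  -- bound the per-episode cardinality by the max delay count
  have hcard : ∀ k ∈ Finset.Icc 1 (K' + 1),
      ((Mset k).card : ℝ) ≤ (((Finset.Icc 1 (K' + 1)).sup U : ℕ) : ℝ) := by
    intro k hk
    obtain ⟨h1, h2⟩ := Finset.mem_Icc.mp hk
    have hcardU : (Mset k).card = U (k - 1) := rfl
    rcases Nat.eq_zero_or_pos (k - 1) with h0 | h0
    · rw [hcardU, h0]
      have hU0 : U 0 = 0 := by
        show ((Finset.Icc 1 0).filter _).card = 0
        simp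
      rw [hU0]
      exact_mod_cast Nat.zero_le _
    · have hle : U (k - 1) ≤ (Finset.Icc 1 (K' + 1)).sup U :=
        Finset.le_sup (Finset.mem_Icc.mpr ⟨h0, by omega⟩)
      rw [hcardU]
      exact_mod_cast hle
  -- the sum-swap bound
  have hswap : ∑ k ∈ Finset.Icc 1 (K' + 1), ∑ t ∈ Mset k, φ t ⬝ᵥ (Sig t)⁻¹ *ᵥ φ t
      ≤ ∑ t ∈ Finset.Icc 1 K', (τ t : ℝ) * (φ t ⬝ᵥ (Sig t)⁻¹ *ᵥ φ t) := by
    have hre : ∀ k ∈ Finset.Icc 1 (K' + 1),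
        ∑ t ∈ Mset k, φ t ⬝ᵥ (Sig t)⁻¹ *ᵥ φ t
          = ∑ t ∈ Finset.Icc 1 (K' + 1),
              if t + 1 ≤ k ∧ k ≤ t + τ t then φ t ⬝ᵥ (Sig t)⁻¹ *ᵥ φ t else 0 := by
      intro k hk
      obtain ⟨h1, h2⟩ := Finset.mem_Icc.mp hk
      rw [← Finset.sum_filter]
      apply Finset.sum_congr _ fun _ _ => rfl
      rw [hMset]
      ext t
      simp only [Finset.mem_filter, Finset.mem_Icc]
      omega
    have inner_bound : ∀ t ∈ Finset.Icc 1 (K' + 1),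
        (∑ k ∈ Finset.Icc 1 (K' + 1),
            if t + 1 ≤ k ∧ k ≤ t + τ t then φ t ⬝ᵥ (Sig t)⁻¹ *ᵥ φ t else 0)
          ≤ if t ≤ K' then (τ t : ℝ) * (φ t ⬝ᵥ (Sig t)⁻¹ *ᵥ φ t) else 0 := by
      intro t _
      by_cases hT : t ≤ K'
      · rw [if_pos hT, ← Finset.sum_filter]
        have hsub2 : (Finset.Icc 1 (K' + 1)).filter (fun k => t + 1 ≤ k ∧ k ≤ t + τ t)
            ⊆ Finset.Icc (t + 1) (t + τ t) := by
          intro k hkk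
          simp only [Finset.mem_filter, Finset.mem_Icc] at hkk ⊢
          omega
        have hIc : (Finset.Icc (t + 1) (t + τ t)).card = τ t := by
          rw [Nat.card_Icc]; omega
        have hcle : ((Finset.Icc 1 (K' + 1)).filter
            (fun k => t + 1 ≤ k ∧ k ≤ t + τ t)).card ≤ τ t :=
          le_trans (Finset.card_le_card hsub2) (le_of_eq hIc)
        calc ∑ _k ∈ (Finset.Icc 1 (K' + 1)).filter (fun k => t + 1 ≤ k ∧ k ≤ t + τ t),
              φ t ⬝ᵥ (Sig t)⁻¹ *ᵥ φ t
            = (((Finset.Icc 1 (K' + 1)).filter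
                (fun k => t + 1 ≤ k ∧ k ≤ t + τ t)).card : ℝ)
                * (φ t ⬝ᵥ (Sig t)⁻¹ *ᵥ φ t) := by
              rw [Finset.sum_const, nsmul_eq_mul]
          _ ≤ (τ t : ℝ) * (φ t ⬝ᵥ (Sig t)⁻¹ *ᵥ φ t) :=
              mul_le_mul_of_nonneg_right (by exact_mod_cast hcle) (habar0 t)
      · rw [if_neg hT]
        apply le_of_eq
        apply Finset.sum_eq_zero
        intro k hkk
        obtain ⟨_, hkk2⟩ := Finset.mem_Icc.mp hkk
        rw [if_neg (by omega)]
    calc ∑ k ∈ Finset.Icc 1 (K' + 1), ∑ t ∈ Mset k, φ t ⬝ᵥ (Sig t)⁻¹ *ᵥ φ t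
        = ∑ k ∈ Finset.Icc 1 (K' + 1), ∑ t ∈ Finset.Icc 1 (K' + 1),
            (if t + 1 ≤ k ∧ k ≤ t + τ t then φ t ⬝ᵥ (Sig t)⁻¹ *ᵥ φ t else 0) :=
          Finset.sum_congr rfl hre
      _ = ∑ t ∈ Finset.Icc 1 (K' + 1), ∑ k ∈ Finset.Icc 1 (K' + 1),
            (if t + 1 ≤ k ∧ k ≤ t + τ t then φ t ⬝ᵥ (Sig t)⁻¹ *ᵥ φ t else 0) :=
          Finset.sum_comm
      _ ≤ ∑ t ∈ Finset.Icc 1 (K' + 1),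
            (if t ≤ K' then (τ t : ℝ) * (φ t ⬝ᵥ (Sig t)⁻¹ *ᵥ φ t) else 0) :=
          Finset.sum_le_sum inner_bound
      _ = ∑ t ∈ Finset.Icc 1 K', (τ t : ℝ) * (φ t ⬝ᵥ (Sig t)⁻¹ *ᵥ φ t) := by
          rw [← Finset.sum_filter]
          apply Finset.sum_congr _ fun _ _ => rfl
          ext t
          simp only [Finset.mem_filter, Finset.mem_Icc]
          omega
  -- put everything together
  have step1 := Finset.sum_le_sum key
  have part1 : ∑ k ∈ Finset.Icc 1 (K' + 1),
      (1 + ((Mset k).card : ℝ)) / 2 * (φ k ⬝ᵥ (Sig k)⁻¹ *ᵥ φ k)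
        ≤ (1 + (((Finset.Icc 1 (K' + 1)).sup U : ℕ) : ℝ)) / 2 *
            ∑ k ∈ Finset.Icc 1 (K' + 1), φ k ⬝ᵥ (Sig k)⁻¹ *ᵥ φ k := by
    rw [Finset.mul_sum]
    refine Finset.sum_le_sum fun k hk => ?_
    exact mul_le_mul_of_nonneg_right (by linarith [hcard k hk]) (haK k)
  have part2 : ∑ k ∈ Finset.Icc 1 (K' + 1),
      (1 / 2 : ℝ) * ∑ t ∈ Mset k, φ t ⬝ᵥ (Sig t)⁻¹ *ᵥ φ t
        ≤ ∑ t ∈ Finset.Icc 1 K', (τ t : ℝ) * (φ t ⬝ᵥ (Sig t)⁻¹ *ᵥ φ t) := by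
    rw [← Finset.mul_sum]
    have hnn : (0:ℝ) ≤ ∑ t ∈ Finset.Icc 1 K', (τ t : ℝ) * (φ t ⬝ᵥ (Sig t)⁻¹ *ᵥ φ t) :=
      Finset.sum_nonneg fun t _ => mul_nonneg (Nat.cast_nonneg _) (habar0 t)
    linarith [hswap]
  calc ∑ k ∈ Finset.Icc 1 (K' + 1),
        Real.sqrt (φ k ⬝ᵥ ((Sig k)⁻¹ * Lam k * (Om k)⁻¹) *ᵥ φ k)
      ≤ ∑ k ∈ Finset.Icc 1 (K' + 1),
          ((1 + ((Mset k).card : ℝ)) / 2 * (φ k ⬝ᵥ (Sig k)⁻¹ *ᵥ φ k)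
            + (1 / 2) * ∑ t ∈ Mset k, φ t ⬝ᵥ (Sig t)⁻¹ *ᵥ φ t) := step1
    _ = (∑ k ∈ Finset.Icc 1 (K' + 1),
          (1 + ((Mset k).card : ℝ)) / 2 * (φ k ⬝ᵥ (Sig k)⁻¹ *ᵥ φ k))
        + ∑ k ∈ Finset.Icc 1 (K' + 1),
            (1 / 2 : ℝ) * ∑ t ∈ Mset k, φ t ⬝ᵥ (Sig t)⁻¹ *ᵥ φ t :=
        Finset.sum_add_distrib
    _ ≤ (1 + (((Finset.Icc 1 (K' + 1)).sup U : ℕ) : ℝ)) / 2 *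
          (∑ k ∈ Finset.Icc 1 (K' + 1), φ k ⬝ᵥ (Sig k)⁻¹ *ᵥ φ k)
        + ∑ t ∈ Finset.Icc 1 K', (τ t : ℝ) * (φ t ⬝ᵥ (Sig t)⁻¹ *ᵥ φ t) :=
        add_le_add part1 part2
end

section
/- Let d and k be positive integers, let λ > 0 be a real number, let φ₁, …, φ_{k−1} ∈ ℝ^d, and define the d×d matrix Ω = λI + Σ_{τ=1}^{k−1} φ_τ φ_τᵀ. Then Σ_{τ=1}^{k−1} φ_τᵀ Ω⁻¹ φ_τ ≤ d. -/
open Matrix Finset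

lemma vecMulVec_posSemidef {d : ℕ} (x : Fin d → ℝ) :
    (vecMulVec x x).PosSemidef := by
  refine Matrix.PosSemidef.of_dotProduct_mulVec_nonneg ?_ ?_
  · ext i j
    simp [vecMulVec, Matrix.conjTranspose_apply, mul_comm]
  · intro y
    have : y ⬝ᵥ (vecMulVec x x).mulVec y = (x ⬝ᵥ y) * (x ⬝ᵥ y) := by
      simp only [dotProduct, mulVec, vecMulVec_apply, Finset.mul_sum]
      apply Finset.sum_congr rfl; intro i _
      rw [Finset.sum_mul]
      apply Finset.sum_congr rfl; intro j _
      ring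
    simpa [this] using mul_self_nonneg (x ⬝ᵥ y)

lemma smul_one_posDef {d : ℕ} (lam : ℝ) (hlam : 0 < lam) :
    (lam • (1 : Matrix (Fin d) (Fin d) ℝ)).PosDef := by
  rw [Matrix.smul_one_eq_diagonal]
  exact Matrix.posDef_diagonal_iff.mpr fun i => hlam

lemma trace_mul_vecMulVec {d : ℕ} (M : Matrix (Fin d) (Fin d) ℝ) (x : Fin d → ℝ) :
    (M * vecMulVec x x).trace = x ⬝ᵥ M.mulVec x := by
  simp only [Matrix.trace, Matrix.diag, Matrix.mul_apply, vecMulVec_apply,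
    dotProduct, mulVec]
  apply Finset.sum_congr rfl; intro i _
  rw [Finset.mul_sum]
  apply Finset.sum_congr rfl; intro j _
  ring

/-- Lemma D.2 / D.3-style bound: with `Ω = λI + Σ_{τ=1}^{k-1} φ_τ φ_τᵀ`,
the sum of quadratic forms `Σ_{τ=1}^{k-1} φ_τᵀ Ω⁻¹ φ_τ` is at most `d`. -/
theorem sum_quadratic_form_inv_le_dim
    (d k : ℕ) (hd : 0 < d) (hk : 0 < k) (lam : ℝ) (hlam : 0 < lam)
    (φ : ℕ → (Fin d → ℝ)) :
    let Ω : Matrix (Fin d) (Fin d) ℝ :=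
      lam • (1 : Matrix (Fin d) (Fin d) ℝ) +
        ∑ τ ∈ Finset.Icc 1 (k - 1), vecMulVec (φ τ) (φ τ)
    ∑ τ ∈ Finset.Icc 1 (k - 1), φ τ ⬝ᵥ Ω⁻¹.mulVec (φ τ) ≤ (d : ℝ) := by
  intro Ω
  set A : Matrix (Fin d) (Fin d) ℝ :=
    ∑ τ ∈ Finset.Icc 1 (k - 1), vecMulVec (φ τ) (φ τ) with hA
  have hApsd : A.PosSemidef := by
    rw [hA]
    exact Finset.sum_induction _ Matrix.PosSemidef (fun a b ha hb => ha.add hb)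
      Matrix.PosSemidef.zero (fun τ _ => vecMulVec_posSemidef (φ τ))
  have hΩpd : Ω.PosDef := (smul_one_posDef lam hlam).add_posSemidef hApsd
  have hinv : Ω⁻¹.PosSemidef := hΩpd.posSemidef.inv
  have hinvmul : Ω⁻¹ * Ω = 1 := Matrix.nonsing_inv_mul Ω (isUnit_iff_ne_zero.mpr hΩpd.det_pos.ne')
  -- rewrite sum as trace
  have hsum : ∑ τ ∈ Finset.Icc 1 (k - 1), φ τ ⬝ᵥ Ω⁻¹.mulVec (φ τ)
      = (Ω⁻¹ * A).trace := by
    rw [hA, Finset.mul_sum, Matrix.trace_sum]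
    exact Finset.sum_congr rfl fun τ _ => (trace_mul_vecMulVec Ω⁻¹ (φ τ)).symm
  have hAeq : A = Ω - lam • (1 : Matrix (Fin d) (Fin d) ℝ) := by
    simp [Ω, hA]
  have htr : (Ω⁻¹ * A).trace = (d : ℝ) - lam * Ω⁻¹.trace := by
    rw [hAeq, Matrix.mul_sub, Matrix.trace_sub, hinvmul, Matrix.trace_one]
    simp [Matrix.mul_smul, Matrix.trace_smul, mul_comm]
  have htrinv : 0 ≤ Ω⁻¹.trace := by
    apply Finset.sum_nonneg
    intro i _
    have := hinv.dotProduct_mulVec_nonneg (Pi.single i 1)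
    simpa [Matrix.dotProduct_mulVec] using this
  rw [hsum, htr]
  nlinarith
end

section
/- Let d, k be positive integers, let λ > 0 and H > 0 be real numbers, let φ₁, …, φ_{k−1} ∈ ℝ^d, and let y₁, …, y_{k−1} be real numbers with |y_τ| ≤ 2H for all τ. Define Ω = λI + Σ_{τ=1}^{k−1} φ_τ φ_τᵀ and the ridge-regression estimate ŵ = Ω⁻¹ Σ_{τ=1}^{k−1} φ_τ y_τ. Then ‖ŵ‖ ≤ 2H √(dk/λ), where ‖·‖ is the Euclidean norm on ℝ^d. -/
open Matrix Finset


lemma aux_posSemidef_vecMulVec {n : Type*} [Fintype n] (v : n → ℝ) :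
    (Matrix.vecMulVec v v).PosSemidef := by
  refine Matrix.PosSemidef.of_dotProduct_mulVec_nonneg ?_ ?_
  · ext i j
    simp [Matrix.conjTranspose_apply, Matrix.vecMulVec_apply, mul_comm]
  · intro x
    have h : star x ⬝ᵥ (Matrix.vecMulVec v v) *ᵥ x = (v ⬝ᵥ x) ^ 2 := by
      simp only [star_trivial, dotProduct, Matrix.mulVec,
        Matrix.vecMulVec_apply, sq, Finset.sum_mul, Finset.mul_sum]
      rw [Finset.sum_comm]
      exact Finset.sum_congr rfl fun i _ => Finset.sum_congr rfl fun j _ => by ring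
    rw [h]
    positivity

lemma aux_quad_eq {n : Type*} [Fintype n] (v : n → ℝ) (A : Matrix n n ℝ) :
    v ⬝ᵥ A *ᵥ v = Matrix.trace (A * Matrix.vecMulVec v v) := by
  simp only [Matrix.trace, Matrix.diag, Matrix.mul_apply, dotProduct,
    Matrix.mulVec, Matrix.vecMulVec_apply, Finset.mul_sum]
  exact Finset.sum_congr rfl fun i _ => Finset.sum_congr rfl fun j _ => by ring

/-- The identity linear equivalence from the pi type to Euclidean space. -/
noncomputable def toE (d : ℕ) : (Fin d → ℝ) ≃ₗ[ℝ] EuclideanSpace ℝ (Fin d) :=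
  (WithLp.linearEquiv 2 ℝ (Fin d → ℝ)).symm

lemma toE_normsq (d : ℕ) (v : Fin d → ℝ) : ‖toE d v‖ ^ 2 = v ⬝ᵥ v := by
  rw [EuclideanSpace.norm_eq, Real.sq_sqrt (by positivity)]
  have h : ∀ i, (toE d v) i = v i := fun i => rfl
  simp only [h, Real.norm_eq_abs, dotProduct, sq]
  exact Finset.sum_congr rfl fun i _ => abs_mul_abs_self _

lemma toE_norm_nonneg (d : ℕ) (v : Fin d → ℝ) : 0 ≤ ‖toE d v‖ := norm_nonneg _

set_option maxHeartbeats 1000000 in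
/-- Lemma D.4 of the paper: the ridge-regression estimate
`ŵ = Ω⁻¹ Σ φ_τ y_τ` with `|y_τ| ≤ 2H` satisfies `‖ŵ‖ ≤ 2H √(dk/λ)`. -/
theorem ridge_regression_weight_norm_bound
    (d k : ℕ) (hd : 0 < d) (hk : 0 < k) (lam H : ℝ) (hlam : 0 < lam) (hH : 0 < H)
    (φ : ℕ → EuclideanSpace ℝ (Fin d)) (y : ℕ → ℝ)
    (hy : ∀ τ ∈ Finset.Icc 1 (k - 1), |y τ| ≤ 2 * H) :
    let Ω : Matrix (Fin d) (Fin d) ℝ :=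
      lam • (1 : Matrix (Fin d) (Fin d) ℝ) +
        ∑ τ ∈ Finset.Icc 1 (k - 1), vecMulVec (φ τ) (φ τ)
    let w : EuclideanSpace ℝ (Fin d) :=
      WithLp.toLp 2 (Ω⁻¹.mulVec (∑ τ ∈ Finset.Icc 1 (k - 1), y τ • φ τ))
    ‖w‖ ≤ 2 * H * Real.sqrt (d * k / lam) := by
  intro Ω w
  classical
  set t : Finset ℕ := Finset.Icc 1 (k - 1) with ht
  set φp : ℕ → Fin d → ℝ := fun τ => (φ τ : Fin d → ℝ) with hφp
  set S : Matrix (Fin d) (Fin d) ℝ := ∑ τ ∈ t, vecMulVec (φ τ) (φ τ) with hSdef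
  set b : Fin d → ℝ := ∑ τ ∈ t, y τ • φp τ with hbdef
  -- Positivity facts
  have hSps : S.PosSemidef := by
    rw [hSdef]
    apply Finset.sum_induction _ _ (fun A B hA hB => hA.add hB) Matrix.PosSemidef.zero
    exact fun τ _ => aux_posSemidef_vecMulVec (φ τ)
  have hΩpd : Ω.PosDef := by
    have h1 : (lam • (1 : Matrix (Fin d) (Fin d) ℝ)).PosDef := by
      rw [Matrix.smul_one_eq_diagonal]
      exact Matrix.PosDef.diagonal fun _ => hlam
    exact h1.add_posSemidef hSps
  have hΩinv : Ω⁻¹.PosDef := hΩpd.inv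
  have hdet : IsUnit Ω.det := hΩpd.det_pos.ne'.isUnit
  -- square root of Ω⁻¹
  set R : Matrix (Fin d) (Fin d) ℝ := (open scoped MatrixOrder in CFC.sqrt Ω⁻¹) with hRdef
  have hRR : R * R = Ω⁻¹ := by
    open scoped MatrixOrder in exact CFC.sqrt_mul_sqrt_self _ hΩinv.posSemidef.nonneg
  have hRsym : Rᵀ = R := by
    open scoped MatrixOrder in exact (CFC.sqrt_nonneg _).posSemidef.isHermitian.eq
  have hquadR : ∀ x : Fin d → ℝ, x ⬝ᵥ Ω⁻¹ *ᵥ x = (R *ᵥ x) ⬝ᵥ (R *ᵥ x) := by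
    intro x
    rw [← hRR, ← Matrix.mulVec_mulVec, Matrix.dotProduct_mulVec,
      ← Matrix.mulVec_transpose, hRsym]
  -- the underlying pi vector of `w`
  set wp : Fin d → ℝ := Ω⁻¹ *ᵥ b with hwp
  have hwE : w = toE d wp := rfl
  -- Step 1: lam * (wp ⬝ᵥ wp) ≤ wp ⬝ᵥ Ω *ᵥ wp
  have hstep1 : lam * (wp ⬝ᵥ wp) ≤ wp ⬝ᵥ Ω *ᵥ wp := by
    have hq : wp ⬝ᵥ Ω *ᵥ wp = lam * (wp ⬝ᵥ wp) + wp ⬝ᵥ S *ᵥ wp := by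
      show wp ⬝ᵥ (lam • 1 + S) *ᵥ wp = _
      rw [Matrix.add_mulVec, dotProduct_add, Matrix.smul_mulVec,
        Matrix.one_mulVec, dotProduct_smul, smul_eq_mul]
    have hnn : 0 ≤ wp ⬝ᵥ S *ᵥ wp := by simpa using hSps.dotProduct_mulVec_nonneg wp
    linarith
  -- Step 2: wp ⬝ᵥ Ω *ᵥ wp = b ⬝ᵥ Ω⁻¹ *ᵥ b
  have hstep2 : wp ⬝ᵥ Ω *ᵥ wp = b ⬝ᵥ Ω⁻¹ *ᵥ b := by
    rw [hwp, Matrix.mulVec_mulVec, Matrix.mul_nonsing_inv _ hdet, Matrix.one_mulVec,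
      dotProduct_comm]
  -- Step 3: bound the norm of R *ᵥ b
  have hRb : R *ᵥ b = ∑ τ ∈ t, y τ • (R *ᵥ φp τ) := by
    rw [hbdef]
    simp only [← Matrix.mulVecLin_apply, map_sum, LinearMap.map_smul]
  have hRbE : toE d (R *ᵥ b) = ∑ τ ∈ t, y τ • toE d (R *ᵥ φp τ) := by
    rw [hRb, map_sum]
    exact Finset.sum_congr rfl fun τ _ => map_smul _ _ _
  have hnormRb : ‖toE d (R *ᵥ b)‖ ≤ 2 * H * ∑ τ ∈ t, ‖toE d (R *ᵥ φp τ)‖ := by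
    calc ‖toE d (R *ᵥ b)‖ = ‖∑ τ ∈ t, y τ • toE d (R *ᵥ φp τ)‖ := by rw [hRbE]
      _ ≤ ∑ τ ∈ t, ‖y τ • toE d (R *ᵥ φp τ)‖ := norm_sum_le _ _
      _ ≤ ∑ τ ∈ t, 2 * H * ‖toE d (R *ᵥ φp τ)‖ := by
          apply Finset.sum_le_sum
          intro τ hτ
          rw [norm_smul, Real.norm_eq_abs]
          exact mul_le_mul_of_nonneg_right (hy τ hτ) (norm_nonneg _)
      _ = 2 * H * ∑ τ ∈ t, ‖toE d (R *ᵥ φp τ)‖ := by rw [Finset.mul_sum]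
  -- Step 4: sum of squared seminorms is at most d
  have htrace : ∑ τ ∈ t, ‖toE d (R *ᵥ φp τ)‖ ^ 2 ≤ (d : ℝ) := by
    have h1 : ∀ τ, ‖toE d (R *ᵥ φp τ)‖ ^ 2
        = Matrix.trace (Ω⁻¹ * vecMulVec (φ τ) (φ τ)) := by
      intro τ
      rw [toE_normsq, ← hquadR, aux_quad_eq]
    have h2 : ∑ τ ∈ t, Matrix.trace (Ω⁻¹ * vecMulVec (φ τ) (φ τ))
        = Matrix.trace (Ω⁻¹ * S) := by
      rw [hSdef, Finset.mul_sum, Matrix.trace_sum]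
    have h3 : Matrix.trace (Ω⁻¹ * S) + lam * Matrix.trace Ω⁻¹ = d := by
      have hinvmul : Ω⁻¹ * Ω = 1 := Matrix.nonsing_inv_mul _ hdet
      have hΩeq : Ω⁻¹ * Ω = lam • Ω⁻¹ + Ω⁻¹ * S := by
        show Ω⁻¹ * (lam • 1 + S) = _
        rw [Matrix.mul_add, Matrix.mul_smul, Matrix.mul_one]
      rw [hΩeq] at hinvmul
      have htr := congrArg Matrix.trace hinvmul
      rw [Matrix.trace_add, Matrix.trace_smul, Matrix.trace_one, Fintype.card_fin] at htr
      simp only [smul_eq_mul] at htr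
      linarith
    have h4 : 0 ≤ Matrix.trace Ω⁻¹ := by
      rw [Matrix.trace]
      apply Finset.sum_nonneg
      intro i _
      have hpos := hΩinv.dotProduct_mulVec_pos (x := Pi.single i 1) (by
        intro hcontra
        have := congrFun hcontra i
        simp at this)
      have heq : star (Pi.single i (1:ℝ)) ⬝ᵥ Ω⁻¹ *ᵥ Pi.single i 1 = Ω⁻¹ i i := by
        simp [single_dotProduct, Matrix.mulVec_single]
      rw [heq] at hpos
      exact hpos.le
    simp_rw [h1]
    rw [h2]
    nlinarith [mul_nonneg hlam.le h4]
  -- Step 5: Cauchy–Schwarz on the sum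
  have hcs : (∑ τ ∈ t, ‖toE d (R *ᵥ φp τ)‖) ^ 2
      ≤ (t.card : ℝ) * ∑ τ ∈ t, ‖toE d (R *ᵥ φp τ)‖ ^ 2 := by
    exact_mod_cast sq_sum_le_card_mul_sum_sq (s := t) (f := fun τ => ‖toE d (R *ᵥ φp τ)‖)
  have hcard : (t.card : ℝ) ≤ k := by
    rw [ht, Nat.card_Icc]
    exact_mod_cast (by omega : k - 1 + 1 - 1 ≤ k)
  have hsum_nonneg : (0:ℝ) ≤ ∑ τ ∈ t, ‖toE d (R *ᵥ φp τ)‖ :=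
    Finset.sum_nonneg fun τ _ => norm_nonneg _
  -- Assemble
  have hkey : lam * ‖w‖ ^ 2 ≤ (2 * H) ^ 2 * (k * d) := by
    have e1 : lam * ‖w‖ ^ 2 ≤ ‖toE d (R *ᵥ b)‖ ^ 2 := by
      rw [hwE, toE_normsq, toE_normsq]
      calc lam * (wp ⬝ᵥ wp) ≤ wp ⬝ᵥ Ω *ᵥ wp := hstep1
        _ = b ⬝ᵥ Ω⁻¹ *ᵥ b := hstep2
        _ = (R *ᵥ b) ⬝ᵥ (R *ᵥ b) := hquadR b
    have e2 : ‖toE d (R *ᵥ b)‖ ^ 2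
        ≤ (2 * H) ^ 2 * ((∑ τ ∈ t, ‖toE d (R *ᵥ φp τ)‖) ^ 2) := by
      rw [← mul_pow]
      exact pow_le_pow_left₀ (norm_nonneg _) hnormRb 2
    have e3 : ((∑ τ ∈ t, ‖toE d (R *ᵥ φp τ)‖) ^ 2) ≤ (k : ℝ) * d := by
      calc _ ≤ (t.card : ℝ) * ∑ τ ∈ t, ‖toE d (R *ᵥ φp τ)‖ ^ 2 := hcs
        _ ≤ (k : ℝ) * d := by
            apply mul_le_mul hcard htrace (Finset.sum_nonneg fun τ _ => by positivity)
              (Nat.cast_nonneg k)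
    nlinarith [sq_nonneg (2*H), e1, e2, e3]
  have hfin : ‖w‖ ^ 2 ≤ (2 * H) ^ 2 * (d * k / lam) := by
    have h := (le_div_iff₀ hlam).2 (by linarith : ‖w‖ ^ 2 * lam ≤ (2*H)^2 * (k*d))
    calc ‖w‖ ^ 2 ≤ (2*H)^2 * (k*d) / lam := h
      _ = (2*H)^2 * ((d:ℝ) * k / lam) := by ring
  calc ‖w‖ = Real.sqrt (‖w‖ ^ 2) := (Real.sqrt_sq (norm_nonneg w)).symm
    _ ≤ Real.sqrt ((2 * H) ^ 2 * ((d:ℝ) * k / lam)) := Real.sqrt_le_sqrt hfin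
    _ = 2 * H * Real.sqrt ((d:ℝ) * k / lam) := by
        rw [Real.sqrt_mul (by positivity), Real.sqrt_sq (by positivity)]
end

section
/- Let Ω be a d×d real symmetric positive definite matrix with largest eigenvalue λ_max and smallest eigenvalue λ_min, and let κ = λ_max/λ_min be its condition number. Set η = 1/(4λ_max) and A = I − 2ηΩ. Let N be a positive integer and γ > 0, and define Θ = γ (I − A^{2N}) Ω⁻¹ (I + A)⁻¹. Then γΩ⁻¹ − Θ is positive definite and Θ − (γ/2)(1 − (1 − 1/(2κ))^{2N}) Ω⁻¹ is positive definite; that is, (γ/2)(1 − (1 − 1/(2κ))^{2N}) Ω⁻¹ ≺ Θ ≺ γΩ⁻¹ in the Loewner order. -/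
open Matrix Finset

section Aux

variable {d : ℕ} {U : Matrix (Fin d) (Fin d) ℝ}

private lemma phi_mul (hU : star U * U = 1) (v w : Fin d → ℝ) :
    (U * diagonal v * star U) * (U * diagonal w * star U)
      = U * diagonal (v * w) * star U := by
  simp only [Matrix.mul_assoc]
  rw [← Matrix.mul_assoc (star U) U, hU, Matrix.one_mul,
      ← Matrix.mul_assoc (diagonal v), Matrix.diagonal_mul_diagonal]
  rfl

private lemma phi_one (hU' : U * star U = 1) :
    U * diagonal (1 : Fin d → ℝ) * star U = 1 := by
  rw [show diagonal (1 : Fin d → ℝ) = (1 : Matrix (Fin d) (Fin d) ℝ) from diagonal_one,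
    Matrix.mul_one, hU']

private lemma phi_add (v w : Fin d → ℝ) :
    (U * diagonal v * star U) + (U * diagonal w * star U)
      = U * diagonal (v + w) * star U := by
  rw [← Matrix.add_mul, ← Matrix.mul_add, Matrix.diagonal_add]
  rfl

private lemma phi_sub (v w : Fin d → ℝ) :
    (U * diagonal v * star U) - (U * diagonal w * star U)
      = U * diagonal (v - w) * star U := by
  rw [← Matrix.sub_mul, ← Matrix.mul_sub, Matrix.diagonal_sub]
  rfl

private lemma phi_smul (c : ℝ) (v : Fin d → ℝ) :
    c • (U * diagonal v * star U) = U * diagonal (c • v) * star U := by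
  rw [Matrix.diagonal_smul, mul_smul_comm, smul_mul_assoc]

private lemma phi_pow (hU : star U * U = 1) (hU' : U * star U = 1) (v : Fin d → ℝ) (n : ℕ) :
    (U * diagonal v * star U) ^ n = U * diagonal (v ^ n) * star U := by
  induction n with
  | zero => rw [pow_zero, pow_zero, phi_one hU']
  | succ k ih => rw [pow_succ, ih, phi_mul hU, ← pow_succ]

private lemma phi_inv (hU : star U * U = 1) (hU' : U * star U = 1) {v : Fin d → ℝ}
    (hv : ∀ i, v i ≠ 0) :
    (U * diagonal v * star U)⁻¹ = U * diagonal v⁻¹ * star U := by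
  apply Matrix.inv_eq_right_inv
  rw [phi_mul hU, show v * v⁻¹ = 1 from funext fun i => mul_inv_cancel₀ (hv i), phi_one hU']

private lemma posDef_conj {n : Type*} [Fintype n] [DecidableEq n] {A : Matrix n n ℝ}
    (hA : A.PosDef) (B : Matrix n n ℝ) (hB : ∀ x, B *ᵥ x = 0 → x = 0) :
    (Bᴴ * A * B).PosDef :=
  Matrix.PosDef.of_dotProduct_mulVec_pos (Matrix.isHermitian_conjTranspose_mul_mul B hA.1) fun x hx => by
    simpa only [Matrix.star_mulVec, Matrix.dotProduct_mulVec, Matrix.vecMul_vecMul]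
      using hA.dotProduct_mulVec_pos (fun h => hx (hB x h))

private lemma phi_posDef (hU' : U * star U = 1) {v : Fin d → ℝ} (hv : ∀ i, 0 < v i) :
    (U * diagonal v * star U).PosDef := by
  have hB : ∀ x : Fin d → ℝ, star U *ᵥ x = 0 → x = 0 := by
    intro x hx
    have : (U * star U) *ᵥ x = U *ᵥ (star U *ᵥ x) := (Matrix.mulVec_mulVec _ _ _).symm
    rw [hU', Matrix.one_mulVec, hx, Matrix.mulVec_zero] at this
    exact this
  have hU2 : (star U)ᴴ = U := by
    rw [← Matrix.star_eq_conjTranspose, star_star]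
  have := posDef_conj (Matrix.PosDef.diagonal hv) (star U) hB
  rwa [hU2] at this

private lemma scalar_ub {γ t a : ℝ} (hγ : 0 < γ) (ht : 0 < t) (ha0 : 0 < a) (ha1 : a < 1)
    (n : ℕ) : 0 < γ * t⁻¹ - γ * ((1 - a ^ n) * t⁻¹ * (1 + a)⁻¹) := by
  have h1 : 0 ≤ a ^ n := pow_nonneg ha0.le n
  have h2 : (0:ℝ) < 1 + a := by linarith
  have h3 : (1 - a ^ n) * (1 + a)⁻¹ < 1 := by
    rw [← div_eq_mul_inv, div_lt_one h2]; linarith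
  have ht' : 0 < t⁻¹ := inv_pos.mpr ht
  have heq : γ * t⁻¹ - γ * ((1 - a ^ n) * t⁻¹ * (1 + a)⁻¹)
      = (γ * t⁻¹) * (1 - (1 - a ^ n) * (1 + a)⁻¹) := by ring
  rw [heq]
  exact mul_pos (mul_pos hγ ht') (by linarith)

private lemma scalar_lb {γ t a b : ℝ} (hγ : 0 < γ) (ht : 0 < t) (ha0 : 0 ≤ a) (ha1 : a < 1)
    (hab : a ≤ b) (hb1 : b < 1) {n : ℕ} (hn : n ≠ 0) :
    0 < γ * ((1 - a ^ n) * t⁻¹ * (1 + a)⁻¹) - γ / 2 * (1 - b ^ n) * t⁻¹ := by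
  have hb0 : 0 ≤ b := ha0.trans hab
  have h1 : a ^ n ≤ b ^ n := pow_le_pow_left₀ ha0 hab n
  have h2 : b ^ n < 1 := pow_lt_one₀ hb0 hb1 hn
  have h3 : (0:ℝ) < 1 + a := by linarith
  have h4 : (2:ℝ)⁻¹ < (1 + a)⁻¹ := inv_strictAnti₀ h3 (by linarith)
  have ht' : 0 < t⁻¹ := inv_pos.mpr ht
  have key : (1 - b ^ n) * 2⁻¹ < (1 - a ^ n) * (1 + a)⁻¹ := by
    calc (1 - b ^ n) * 2⁻¹ < (1 - b ^ n) * (1 + a)⁻¹ :=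
          mul_lt_mul_of_pos_left h4 (by linarith)
    _ ≤ (1 - a ^ n) * (1 + a)⁻¹ :=
          mul_le_mul_of_nonneg_right (by linarith) (by positivity)
  have heq : γ * ((1 - a ^ n) * t⁻¹ * (1 + a)⁻¹) - γ / 2 * (1 - b ^ n) * t⁻¹
      = (γ * t⁻¹) * ((1 - a ^ n) * (1 + a)⁻¹ - (1 - b ^ n) * 2⁻¹) := by ring
  rw [heq]
  exact mul_pos (mul_pos hγ ht') (by linarith)

end Aux

/-- Second part of Lemma C.1 of the paper: the Langevin Monte Carlo covariance
`Θ = γ(I - A^{2N}) Ω⁻¹ (I + A)⁻¹` with `A = I - 2ηΩ`, `η = 1/(4λ_max)`, satisfies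
`(γ/2)(1 - (1 - 1/(2κ))^{2N}) Ω⁻¹ ≺ Θ ≺ γ Ω⁻¹` in the Loewner order. -/
theorem langevin_covariance_loewner_bounds
    (d : ℕ) (hd : 0 < d) (Ω : Matrix (Fin d) (Fin d) ℝ)
    (hherm : Ω.IsHermitian) (hΩ : Ω.PosDef)
    (N : ℕ) (hN : 0 < N) (γ : ℝ) (hγ : 0 < γ) :
    let hne : (Finset.univ : Finset (Fin d)).Nonempty := ⟨⟨0, hd⟩, Finset.mem_univ _⟩
    let lmax := Finset.univ.sup' hne hherm.eigenvalues
    let lmin := Finset.univ.inf' hne hherm.eigenvalues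
    let κ := lmax / lmin
    let η := 1 / (4 * lmax)
    let A := (1 : Matrix (Fin d) (Fin d) ℝ) - (2 * η) • Ω
    let Θ := γ • (((1 : Matrix (Fin d) (Fin d) ℝ) - A ^ (2 * N)) * Ω⁻¹ *
      ((1 : Matrix (Fin d) (Fin d) ℝ) + A)⁻¹)
    (γ • Ω⁻¹ - Θ).PosDef ∧
      (Θ - ((γ / 2) * (1 - (1 - 1 / (2 * κ)) ^ (2 * N))) • Ω⁻¹).PosDef := by
  intro hne lmax lmin κ η A Θ
  classical
  set U : Matrix (Fin d) (Fin d) ℝ := (hherm.eigenvectorUnitary : Matrix (Fin d) (Fin d) ℝ) with hUdef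
  have hU' : U * star U = 1 :=
    Matrix.mem_unitaryGroup_iff.mp hherm.eigenvectorUnitary.2
  have hU : star U * U = 1 :=
    Matrix.mem_unitaryGroup_iff'.mp hherm.eigenvectorUnitary.2
  set v : Fin d → ℝ := hherm.eigenvalues with hvdef
  -- positivity of eigenvalues and bounds
  have hvpos : ∀ i, 0 < v i := fun i => hΩ.eigenvalues_pos i
  have hvle : ∀ i, v i ≤ lmax := fun i => Finset.le_sup' _ (Finset.mem_univ i)
  have hvge : ∀ i, lmin ≤ v i := fun i => Finset.inf'_le _ (Finset.mem_univ i)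
  have hlminpos : 0 < lmin := by
    obtain ⟨j, -, hj⟩ := Finset.exists_mem_eq_inf' hne hherm.eigenvalues
    rw [show lmin = hherm.eigenvalues j from hj]
    exact hvpos j
  have hlmaxpos : 0 < lmax := lt_of_lt_of_le hlminpos ((hvge ⟨0, hd⟩).trans (hvle ⟨0, hd⟩))
  -- spectral representation
  have hΩrep : Ω = U * diagonal v * star U := by
    have h := hherm.spectral_theorem
    have hc : (RCLike.ofReal ∘ hherm.eigenvalues : Fin d → ℝ) = v := by
      funext i; simp [RCLike.ofReal_real_eq_id]; rfl
    rw [hc] at h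
    exact h
  set a : Fin d → ℝ := (1 : Fin d → ℝ) - (2 * η) • v with hadef
  have hη : η = 1 / (4 * lmax) := rfl
  have haval : ∀ i, a i = 1 - 2 * (1 / (4 * lmax)) * v i := by
    intro i; simp [hadef, hη]
  have ha_pos : ∀ i, 0 < a i := by
    intro i
    rw [haval i]
    have h4 : (4 * lmax) * (1 / (4 * lmax)) = 1 :=
      mul_one_div_cancel (by nlinarith : (4:ℝ) * lmax ≠ 0)
    nlinarith [hvle i, hvpos i, hlmaxpos]
  have ha_lt : ∀ i, a i < 1 := by
    intro i
    rw [haval i]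
    have h0 : 0 < 1 / (4 * lmax) := by
      apply div_pos one_pos; linarith
    have : 0 < 2 * (1 / (4 * lmax)) * v i := mul_pos (mul_pos two_pos h0) (hvpos i)
    linarith
  have hArep : A = U * diagonal a * star U := by
    show (1 : Matrix (Fin d) (Fin d) ℝ) - (2 * η) • Ω = _
    rw [hΩrep, phi_smul, ← phi_one hU', phi_sub]
  have h1Arep : (1 : Matrix (Fin d) (Fin d) ℝ) + A
      = U * diagonal ((1 : Fin d → ℝ) + a) * star U := by
    rw [hArep, ← phi_one hU', phi_add]
  have hΩinv : Ω⁻¹ = U * diagonal v⁻¹ * star U := by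
    rw [hΩrep, phi_inv hU hU' (fun i => (hvpos i).ne')]
  have h1Ainv : ((1 : Matrix (Fin d) (Fin d) ℝ) + A)⁻¹
      = U * diagonal ((1 : Fin d → ℝ) + a)⁻¹ * star U := by
    have h1ane : ∀ i, ((1 : Fin d → ℝ) + a) i ≠ 0 := by
      intro i
      have h := ha_pos i
      have h2 : (0:ℝ) < 1 + a i := by linarith
      simpa [Pi.add_apply] using h2.ne'
    rw [h1Arep, phi_inv hU hU' h1ane]
  have hΘrep : Θ = U * diagonal
      (γ • (((1 : Fin d → ℝ) - a ^ (2 * N)) * v⁻¹ * ((1 : Fin d → ℝ) + a)⁻¹)) * star U := by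
    show γ • (((1 : Matrix (Fin d) (Fin d) ℝ) - A ^ (2 * N)) * Ω⁻¹ *
      ((1 : Matrix (Fin d) (Fin d) ℝ) + A)⁻¹) = _
    rw [h1Ainv, hΩinv, hArep, phi_pow hU hU', ← phi_one hU', phi_sub,
      phi_mul hU, phi_mul hU, phi_smul]
  set θv : Fin d → ℝ :=
    γ • (((1 : Fin d → ℝ) - a ^ (2 * N)) * v⁻¹ * ((1 : Fin d → ℝ) + a)⁻¹) with hθdef
  constructor
  · have hrep : γ • Ω⁻¹ - Θ = U * diagonal (γ • v⁻¹ - θv) * star U := by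
      rw [hΩinv, phi_smul, hΘrep, phi_sub]
    rw [hrep]
    apply phi_posDef hU'
    intro i
    have := scalar_ub hγ (hvpos i) (ha_pos i) (ha_lt i) (2 * N)
    simpa [hθdef, Pi.sub_apply, Pi.smul_apply, Pi.mul_apply, Pi.inv_apply, Pi.pow_apply,
      smul_eq_mul, mul_assoc] using this
  · have hκ : κ = lmax / lmin := rfl
    have hbval : 1 / (2 * κ) = lmin / (2 * lmax) := by
      rw [hκ]
      field_simp
    have hrep : Θ - ((γ / 2) * (1 - (1 - 1 / (2 * κ)) ^ (2 * N))) • Ω⁻¹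
        = U * diagonal (θv - ((γ / 2) * (1 - (1 - 1 / (2 * κ)) ^ (2 * N))) • v⁻¹) * star U := by
      rw [hΩinv, phi_smul, hΘrep, phi_sub]
    rw [hrep]
    apply phi_posDef hU'
    intro i
    have hab : a i ≤ 1 - 1 / (2 * κ) := by
      rw [haval i, hbval]
      have h1 : 2 * (1 / (4 * lmax)) * v i = v i / (2 * lmax) := by
        field_simp; ring
      rw [h1]
      have : lmin / (2 * lmax) ≤ v i / (2 * lmax) := by
        gcongr
        exact hvge i
      linarith
    have hb1 : 1 - 1 / (2 * κ) < 1 := by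
      rw [hbval]
      have : 0 < lmin / (2 * lmax) := by positivity
      linarith
    have := scalar_lb hγ (hvpos i) (ha_pos i).le (ha_lt i) hab hb1
      (Nat.mul_ne_zero two_ne_zero hN.ne')
    simpa [hθdef, Pi.sub_apply, Pi.smul_apply, Pi.mul_apply, Pi.inv_apply, Pi.pow_apply,
      Pi.add_apply, Pi.one_apply, smul_eq_mul, mul_assoc] using this
end
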